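/- arXiv:2210.13065 — 2 statements merged into one kernel-verified Lean document; each statement's English description precedes it below -/
import Mathlib

section
/- Let (D,v) be a positive cooperative game. The proportional values satisfy the equal proportional gains property: for every A ⊆ D and all distinct i, j ∈ A, PV_i(A,v)·PV_i(A\{j},v)^{-1} = PV_j(A,v)·PV_j(A\{i},v)^{-1}; equivalently PV_i(A,v)·PV_j(A\{i},v) = PV_j(A,v)·PV_i(A\{j},v). -/
open Finset

/-- The ratio potential `R(A, v)` of a cooperative game, defined recursively by
`R(∅, v) = 1` and `R(A, v) = v(A) · (Σ_{j∈A} R(A\{j}, v)⁻¹)⁻¹` for nonempty `A`. -/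
noncomputable def ratioPot {d : ℕ} (v : Finset (Fin d) → ℝ) (A : Finset (Fin d)) : ℝ :=
  if A = ∅ then 1
  else v A * (∑ j ∈ A.attach, (ratioPot v (A.erase j.1))⁻¹)⁻¹
termination_by A.card
decreasing_by exact Finset.card_erase_lt_of_mem j.2

/-- The proportional value `PV_i(A, v) = R(A, v)/R(A\{i}, v)` of player `i` in the subgame
of a positive cooperative game on the coalition `A`. -/
noncomputable def pvSub {d : ℕ} (v : Finset (Fin d) → ℝ) (A : Finset (Fin d)) (i : Fin d) :
    ℝ :=
  ratioPot v A / ratioPot v (A.erase i)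

lemma ratioPot_pos {d : ℕ} (v : Finset (Fin d) → ℝ)
    (hpos : ∀ A : Finset (Fin d), A ≠ ∅ → 0 < v A) (A : Finset (Fin d)) :
    0 < ratioPot v A := by
  induction A using Finset.strongInduction with
  | _ A ih =>
    rw [ratioPot]
    split
    · exact one_pos
    · rename_i h
      refine mul_pos (hpos A h) (inv_pos.2 (Finset.sum_pos (fun k _ => inv_pos.2 (ih _ (Finset.erase_ssubset k.2))) ?_))
      rw [Finset.attach_nonempty_iff]
      exact Finset.nonempty_iff_ne_empty.2 h

/-- the proportional values of a positive cooperative game satisfy the equal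
proportional gains property, in both equivalent formulations. -/
theorem pv_equal_proportional_gains {d : ℕ} (v : Finset (Fin d) → ℝ) (hv0 : v ∅ = 0)
    (hpos : ∀ A : Finset (Fin d), A ≠ ∅ → 0 < v A)
    (A : Finset (Fin d)) (i j : Fin d) (hi : i ∈ A) (hj : j ∈ A) (hij : i ≠ j) :
    pvSub v A i * (pvSub v (A.erase j) i)⁻¹ = pvSub v A j * (pvSub v (A.erase i) j)⁻¹ ∧
    pvSub v A i * pvSub v (A.erase i) j = pvSub v A j * pvSub v (A.erase j) i := by
  have h1 := (ratioPot_pos v hpos (A.erase i)).ne'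
  have h2 := (ratioPot_pos v hpos (A.erase j)).ne'
  have h3 := (ratioPot_pos v hpos ((A.erase i).erase j)).ne'
  have h4 := (ratioPot_pos v hpos ((A.erase j).erase i)).ne'
  have hc : (A.erase j).erase i = (A.erase i).erase j := Finset.erase_right_comm
  constructor
  · unfold pvSub
    rw [hc]
    field_simp
  · unfold pvSub
    rw [hc]
    field_simp
end

section
/- Let ρ ∈ (−1,1), let Z₁, Z₂ be independent standard Gaussian random variables on a probability space (Ω,ℱ,ℙ), and set X₁ = Z₁, X₂ = ρZ₁ + √(1−ρ²)Z₂ (so that (X₁,X₂) is a centered Gaussian vector with unit variances and correlation ρ), and Y = X₁. Then the Shapley effects of this model are Sh₁ = 1 − ρ²/2 and Sh₂ = ρ²/2. -/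
open MeasureTheory ProbabilityTheory

/-- `σ(X_A)`: the σ-algebra generated by the random variables `(X_i)_{i ∈ A}`
(for `A = ∅` this is the trivial σ-algebra `⊥`, so that `S^clos_∅ = 0`). -/
noncomputable def sigmaGen {Ω : Type*} {d : ℕ} (X : Fin d → Ω → ℝ) (A : Finset (Fin d)) :
    MeasurableSpace Ω :=
  ⨆ i ∈ A, MeasurableSpace.comap (X i) inferInstance

/-- `S^clos_A = Var(E[Y | σ(X_A)])/Var(Y)`: the closed Sobol' index of the coalition `A`. -/
noncomputable def closedSobol {Ω : Type*} [mΩ : MeasurableSpace Ω] (μ : Measure Ω) {d : ℕ}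
    (X : Fin d → Ω → ℝ) (Y : Ω → ℝ) (A : Finset (Fin d)) : ℝ :=
  variance (μ[Y|sigmaGen X A]) μ / variance Y μ

/-- The Shapley effect of the input `i`:
`Sh_i = Σ_{A ⊆ D\{i}} (|A|!·(d−|A|−1)!/d!)·(S^clos_{A∪{i}} − S^clos_A)`. -/
noncomputable def shapleyEffect {Ω : Type*} [mΩ : MeasurableSpace Ω] (μ : Measure Ω) {d : ℕ}
    (X : Fin d → Ω → ℝ) (Y : Ω → ℝ) (i : Fin d) : ℝ :=
  ∑ A ∈ (Finset.univ.erase i).powerset,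
    (((A.card.factorial * (d - A.card - 1).factorial : ℕ) : ℝ) / (d.factorial : ℝ)) *
      (closedSobol μ X Y (insert i A) - closedSobol μ X Y A)


noncomputable def rotLin (c s : ℝ) (h : c ^ 2 + s ^ 2 = 1) :
    EuclideanSpace ℝ (Fin 2) ≃ₗ[ℝ] EuclideanSpace ℝ (Fin 2) where
  toFun x := WithLp.toLp 2 ![c * x 0 - s * x 1, s * x 0 + c * x 1]
  invFun y := WithLp.toLp 2 ![c * y 0 + s * y 1, -s * y 0 + c * y 1]
  map_add' x y := by
    ext i
    fin_cases i <;> simp [Matrix.cons_val_zero, Matrix.cons_val_one] <;> ring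
  map_smul' r x := by
    ext i
    fin_cases i <;> simp [Matrix.cons_val_zero, Matrix.cons_val_one] <;> ring
  left_inv x := by
    ext i
    fin_cases i <;> simp [Matrix.cons_val_zero, Matrix.cons_val_one]
    · linear_combination x 0 * h
    · linear_combination x 1 * h
  right_inv y := by
    ext i
    fin_cases i <;> simp [Matrix.cons_val_zero, Matrix.cons_val_one]
    · linear_combination y 0 * h
    · linear_combination y 1 * h

lemma rotLin_apply (c s : ℝ) (h : c ^ 2 + s ^ 2 = 1) (x : EuclideanSpace ℝ (Fin 2)) :
    rotLin c s h x = ![c * x 0 - s * x 1, s * x 0 + c * x 1] := rfl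

noncomputable def rotIso (c s : ℝ) (h : c ^ 2 + s ^ 2 = 1) :
    EuclideanSpace ℝ (Fin 2) ≃ₗᵢ[ℝ] EuclideanSpace ℝ (Fin 2) :=
  ⟨rotLin c s h, by
    intro x
    have h2 : ∀ y : EuclideanSpace ℝ (Fin 2), ‖y‖ = Real.sqrt (y 0 ^ 2 + y 1 ^ 2) := by
      intro y
      rw [EuclideanSpace.norm_eq, Fin.sum_univ_two]
      simp [sq_abs]
    rw [h2, h2, rotLin_apply]
    simp only [Matrix.cons_val_zero, Matrix.cons_val_one, Matrix.head_cons]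
    congr 1
    linear_combination (x 0 ^ 2 + x 1 ^ 2) * h⟩

lemma rotIso_apply (c s : ℝ) (h : c ^ 2 + s ^ 2 = 1) (x : EuclideanSpace ℝ (Fin 2)) :
    rotIso c s h x = ![c * x 0 - s * x 1, s * x 0 + c * x 1] := rfl

lemma rot_measurePreserving (c s : ℝ) (h : c ^ 2 + s ^ 2 = 1) :
    MeasurePreserving (fun p : ℝ × ℝ => (c * p.1 - s * p.2, s * p.1 + c * p.2))
      volume volume := by
  have e1 := EuclideanSpace.volume_preserving_symm_measurableEquiv_toLp (ι := Fin 2)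
  have e2 := MeasureTheory.volume_preserving_finTwoArrow ℝ
  have e3 := (rotIso c s h).measurePreserving
  have key : (fun p : ℝ × ℝ => (c * p.1 - s * p.2, s * p.1 + c * p.2)) =
      (MeasurableEquiv.finTwoArrow ∘ (MeasurableEquiv.toLp 2 (Fin 2 → ℝ)).symm) ∘
        (rotIso c s h) ∘
        (((MeasurableEquiv.toLp 2 (Fin 2 → ℝ)).symm).symm ∘ MeasurableEquiv.finTwoArrow.symm) := by
    funext p
    simp [MeasurableEquiv.finTwoArrow, rotIso_apply]
  rw [key]
  exact (e2.comp e1).comp (e3.comp ((MeasurePreserving.symm _ e1).comp (MeasurePreserving.symm _ e2)))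

noncomputable def G2 : ℝ × ℝ → ENNReal := fun p => gaussianPDF 0 1 p.1 * gaussianPDF 0 1 p.2

lemma G2_measurable : Measurable G2 :=
  ((measurable_gaussianPDF 0 1).comp measurable_fst).mul
    ((measurable_gaussianPDF 0 1).comp measurable_snd)

lemma gauss_prod :
    (gaussianReal 0 1).prod (gaussianReal 0 1) = (volume : Measure (ℝ × ℝ)).withDensity G2 := by
  have h1 : gaussianReal 0 1 = (volume : Measure ℝ).withDensity (gaussianPDF 0 1) :=
    gaussianReal_of_var_ne_zero 0 one_ne_zero
  refine Measure.prod_eq fun s t hs ht => ?_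
  rw [MeasureTheory.Measure.volume_eq_prod, withDensity_apply _ (hs.prod ht),
    ← Measure.prod_restrict]
  simp only [G2]
  rw [lintegral_prod_mul ((measurable_gaussianPDF 0 1).aemeasurable)
      ((measurable_gaussianPDF 0 1).aemeasurable),
    h1, withDensity_apply _ hs, withDensity_apply _ ht]

lemma G2_rot (c s : ℝ) (h : c ^ 2 + s ^ 2 = 1) (p : ℝ × ℝ) :
    G2 (c * p.1 - s * p.2, s * p.1 + c * p.2) = G2 p := by
  obtain ⟨a, b⟩ := p
  simp only [G2, gaussianPDF]
  rw [← ENNReal.ofReal_mul (gaussianPDFReal_nonneg _ _ _),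
    ← ENNReal.ofReal_mul (gaussianPDFReal_nonneg _ _ _)]
  congr 1
  have e : ∀ k u v : ℝ, k * Real.exp u * (k * Real.exp v) = k ^ 2 * Real.exp (u + v) := by
    intro k u v; rw [Real.exp_add]; ring
  simp only [gaussianPDFReal, NNReal.coe_one, mul_one, sub_zero]
  rw [e, e]
  congr 1
  field_simp
  congr 1
  linear_combination (-(a ^ 2 + b ^ 2) / 2) * h

lemma gauss_integrable_sq : Integrable (fun x : ℝ => x ^ 2) (gaussianReal 0 1) := by
  rw [gaussianReal_of_var_ne_zero 0 one_ne_zero,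
    integrable_withDensity_iff (measurable_gaussianPDF 0 1)
      (ae_of_all _ fun x => ENNReal.ofReal_lt_top)]
  have h := (integrable_rpow_mul_exp_neg_mul_sq (b := 1/2) (by norm_num)
      (s := 2) (by norm_num)).const_mul ((Real.sqrt (2 * Real.pi * 1))⁻¹)
  refine h.congr (ae_of_all _ fun x => ?_)
  show (Real.sqrt (2 * Real.pi * 1))⁻¹ * (x ^ 2 * Real.exp (-(1 / 2) * x ^ 2))
    = x ^ 2 * (gaussianPDF 0 1 x).toReal
  rw [show gaussianPDF 0 1 x = ENNReal.ofReal (gaussianPDFReal 0 1 x) from rfl,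
    ENNReal.toReal_ofReal (gaussianPDFReal_nonneg _ _ _), gaussianPDFReal]
  have : (x : ℝ) ^ (2 : ℝ) = x ^ (2 : ℕ) := by
    rw [show (2:ℝ) = ((2:ℕ):ℝ) by norm_num, Real.rpow_natCast]
  rw [this]
  simp only [NNReal.coe_one, mul_one, sub_zero]
  rw [show -x ^ 2 / 2 = -(1 / 2) * x ^ 2 by ring]
  ring

lemma gauss_memLp_two : MemLp (id : ℝ → ℝ) 2 (gaussianReal 0 1) :=
  (memLp_two_iff_integrable_sq aestronglyMeasurable_id).mpr gauss_integrable_sq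

lemma gauss_map_neg : (gaussianReal 0 1).map (fun x : ℝ => -x) = gaussianReal 0 1 := by
  have h := gaussianReal_map_const_mul (μ := 0) (v := 1) (-1)
  have h2 : ((fun x : ℝ => (-1) * x)) = (fun x : ℝ => -x) := by funext x; ring
  rw [show ((-1 : ℝ) * ·) = (fun x : ℝ => (-1) * x) from rfl, h2] at h
  rw [h]
  norm_num

lemma gauss_integral_id : ∫ x, x ∂(gaussianReal 0 1) = 0 := by
  have h1 := integral_map (μ := gaussianReal 0 1) (measurable_neg.aemeasurable)
    (f := fun y : ℝ => y) measurable_id.aestronglyMeasurable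
  rw [gauss_map_neg] at h1
  have h2 : ∫ x : ℝ, -x ∂(gaussianReal 0 1) = -∫ x : ℝ, x ∂(gaussianReal 0 1) := integral_neg _
  linarith [h1, h2]

lemma gauss_integral_sq_pos : 0 < ∫ x, x ^ 2 ∂(gaussianReal 0 1) := by
  rw [integral_pos_iff_support_of_nonneg (fun x => sq_nonneg x) gauss_integrable_sq]
  have hsupp : Function.support (fun x : ℝ => x ^ 2) = {(0:ℝ)}ᶜ := by
    ext x; simp [Function.support, pow_eq_zero_iff]
  rw [hsupp]
  have h0 : (gaussianReal 0 1) {(0:ℝ)} = 0 :=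
    gaussianReal_absolutelyContinuous 0 one_ne_zero
      (show (volume : Measure ℝ) {0} = 0 from measure_singleton 0)
  have : (gaussianReal 0 1) {(0:ℝ)}ᶜ = 1 := by
    rw [measure_compl (measurableSet_singleton 0) (measure_ne_top _ _), h0, measure_univ]
    simp
  rw [this]; norm_num

lemma gauss2_map_rot (c s : ℝ) (h : c ^ 2 + s ^ 2 = 1) :
    ((gaussianReal 0 1).prod (gaussianReal 0 1)).map
        (fun p : ℝ × ℝ => (c * p.1 - s * p.2, s * p.1 + c * p.2))
      = (gaussianReal 0 1).prod (gaussianReal 0 1) := by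
  set R := fun p : ℝ × ℝ => (c * p.1 - s * p.2, s * p.1 + c * p.2) with hR
  have hRm : Measurable R := by fun_prop
  rw [gauss_prod]
  ext t ht
  rw [Measure.map_apply hRm ht, withDensity_apply _ (hRm ht), withDensity_apply _ ht]
  calc ∫⁻ x in R ⁻¹' t, G2 x ∂volume
      = ∫⁻ x in R ⁻¹' t, G2 (R x) ∂volume := by
        refine setLIntegral_congr_fun (hRm ht) (fun x _ => ?_)
        exact (G2_rot c s h x).symm
    _ = ∫⁻ y in t, G2 y ∂(volume.map R) := (setLIntegral_map ht G2_measurable hRm).symm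
    _ = ∫⁻ y in t, G2 y ∂volume := by rw [(rot_measurePreserving c s h).map_eq]

lemma variance_congr' {Ω : Type*} {m : MeasurableSpace Ω} {μ : Measure Ω} {f g : Ω → ℝ}
    (h : f =ᵐ[μ] g) : variance f μ = variance g μ := by
  unfold variance evariance
  rw [integral_congr_ae h]
  congr 1
  refine lintegral_congr_ae ?_
  filter_upwards [h] with ω hω
  rw [hω]

lemma variance_const' {Ω : Type*} {m : MeasurableSpace Ω} {μ : Measure Ω}
    [IsProbabilityMeasure μ] (c : ℝ) : variance (fun _ => c) μ = 0 := by
  unfold variance evariance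
  have : ∫ ω, (fun _ : Ω => c) ω ∂μ = c := by simp
  rw [this]
  simp

lemma law_memLp {Ω : Type*} {mΩ : MeasurableSpace Ω} {μ : Measure Ω} {f : Ω → ℝ}
    (hf : Measurable f) (hlaw : μ.map f = gaussianReal 0 1) : MemLp f 2 μ := by
  have h := (memLp_map_measure_iff (g := (id : ℝ → ℝ))
      (by rw [hlaw]; exact aestronglyMeasurable_id) hf.aemeasurable).mp
    (by rw [hlaw]; exact gauss_memLp_two)
  simpa using h

lemma law_integral {Ω : Type*} {mΩ : MeasurableSpace Ω} {μ : Measure Ω} {f : Ω → ℝ}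
    (hf : Measurable f) (hlaw : μ.map f = gaussianReal 0 1) : ∫ ω, f ω ∂μ = 0 := by
  have h := integral_map (μ := μ) hf.aemeasurable
    (f := fun y : ℝ => y) measurable_id.aestronglyMeasurable
  rw [hlaw] at h
  rw [← h, gauss_integral_id]

lemma law_variance {Ω : Type*} {mΩ : MeasurableSpace Ω} {μ : Measure Ω} [IsProbabilityMeasure μ]
    {f : Ω → ℝ} (hf : Measurable f) (hlaw : μ.map f = gaussianReal 0 1) :
    variance f μ = ∫ x, x ^ 2 ∂(gaussianReal 0 1) := by
  rw [variance_eq_sub (law_memLp hf hlaw)]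
  have h2 : μ[f ^ 2] = ∫ x, x ^ 2 ∂(gaussianReal 0 1) := by
    have h := integral_map (μ := μ) hf.aemeasurable
      (f := fun y : ℝ => y ^ 2) (measurable_id.pow_const 2).aestronglyMeasurable
    rw [hlaw] at h
    rw [show (f ^ 2 : Ω → ℝ) = fun x => f x ^ 2 from rfl, ← h]
  rw [h2, law_integral hf hlaw]
  ring

lemma sigmaGen_singleton {Ω : Type*} {d : ℕ} (X : Fin d → Ω → ℝ) (i : Fin d) :
    sigmaGen X {i} = MeasurableSpace.comap (X i) inferInstance := by
  simp [sigmaGen]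

lemma sigmaGen_empty {Ω : Type*} {d : ℕ} (X : Fin d → Ω → ℝ) :
    sigmaGen X ∅ = ⊥ := by
  simp [sigmaGen]

lemma sigmaGen_le {Ω : Type*} {mΩ : MeasurableSpace Ω} {d : ℕ} {X : Fin d → Ω → ℝ}
    (hX : ∀ i, Measurable (X i)) (A : Finset (Fin d)) : sigmaGen X A ≤ mΩ :=
  iSup₂_le fun i _ => measurable_iff_comap_le.mp (hX i)

lemma le_sigmaGen {Ω : Type*} {d : ℕ} {X : Fin d → Ω → ℝ} {A : Finset (Fin d)} {i : Fin d}
    (hi : i ∈ A) : MeasurableSpace.comap (X i) inferInstance ≤ sigmaGen X A :=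
  le_iSup₂ (f := fun (j : _) (_ : j ∈ A) => MeasurableSpace.comap (X j) inferInstance) i hi

lemma stronglyMeasurable_sigmaGen {Ω : Type*} {d : ℕ} {X : Fin d → Ω → ℝ} {A : Finset (Fin d)}
    {i : Fin d} (hi : i ∈ A) : StronglyMeasurable[sigmaGen X A] (X i) := by
  have h0 : Measurable[MeasurableSpace.comap (X i) inferInstance] (X i) :=
    measurable_iff_comap_le.mpr le_rfl
  exact (h0.mono (le_sigmaGen hi) le_rfl).stronglyMeasurable


/-- for `(X₁, X₂)` a centered Gaussian vector with unit variances and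
correlation `ρ` (built from independent standard Gaussians `Z₁, Z₂`) and the model
`Y = X₁`, the Shapley effects are `Sh₁ = 1 − ρ²/2` and `Sh₂ = ρ²/2`. -/
theorem shapley_joke {Ω : Type*} {mΩ : MeasurableSpace Ω} (μ : Measure Ω)
    [IsProbabilityMeasure μ] (ρ : ℝ) (hρ₁ : -1 < ρ) (hρ₂ : ρ < 1)
    (Z₁ Z₂ : Ω → ℝ) (hZ₁ : Measurable Z₁) (hZ₂ : Measurable Z₂)
    (hindep : IndepFun Z₁ Z₂ μ)
    (hlaw₁ : μ.map Z₁ = gaussianReal 0 1) (hlaw₂ : μ.map Z₂ = gaussianReal 0 1)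
    (X : Fin 2 → Ω → ℝ) (hX₁ : X 0 = Z₁)
    (hX₂ : X 1 = fun ω => ρ * Z₁ ω + Real.sqrt (1 - ρ ^ 2) * Z₂ ω)
    (Y : Ω → ℝ) (hY : Y = X 0) :
    shapleyEffect μ X Y 0 = 1 - ρ ^ 2 / 2 ∧ shapleyEffect μ X Y 1 = ρ ^ 2 / 2 := by
  -- setup
  have hρsq : 0 < 1 - ρ ^ 2 := by nlinarith
  set c : ℝ := Real.sqrt (1 - ρ ^ 2) with hc
  have hs2 : c ^ 2 = 1 - ρ ^ 2 := Real.sq_sqrt hρsq.le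
  have hrot : c ^ 2 + ρ ^ 2 = 1 := by rw [hs2]; ring
  set U : Ω → ℝ := fun ω => c * Z₁ ω - ρ * Z₂ ω with hU
  have hXmeas : ∀ i, Measurable (X i) := by
    intro i
    fin_cases i
    · show Measurable (X 0)
      rw [hX₁]; exact hZ₁
    · show Measurable (X 1)
      rw [hX₂]; fun_prop
  have hVmeas : Measurable (X 1) := hXmeas 1
  have hUmeas : Measurable U := by fun_prop
  -- joint law and rotation
  have hjoint : μ.map (fun ω => (Z₁ ω, Z₂ ω)) = (gaussianReal 0 1).prod (gaussianReal 0 1) := by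
    have h := (indepFun_iff_map_prod_eq_prod_map_map hZ₁.aemeasurable hZ₂.aemeasurable).mp hindep
    rw [hlaw₁, hlaw₂] at h
    exact h
  have hUV : μ.map (fun ω => (U ω, X 1 ω))
      = (gaussianReal 0 1).prod (gaussianReal 0 1) := by
    have hcomp : (fun ω => (U ω, X 1 ω)) =
        (fun p : ℝ × ℝ => (c * p.1 - ρ * p.2, ρ * p.1 + c * p.2)) ∘
          (fun ω => (Z₁ ω, Z₂ ω)) := by
      funext ω
      simp only [Function.comp_apply, hU, hX₂]
    rw [hcomp, ← Measure.map_map (by fun_prop) (hZ₁.prodMk hZ₂), hjoint,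
      gauss2_map_rot c ρ hrot]
  have hmapU : μ.map U = gaussianReal 0 1 := by
    have h1 : U = Prod.fst ∘ (fun ω => (U ω, X 1 ω)) := rfl
    rw [h1, ← Measure.map_map measurable_fst (hUmeas.prodMk hVmeas), hUV,
      Measure.map_fst_prod]
    simp
  have hmapV : μ.map (X 1) = gaussianReal 0 1 := by
    have h1 : X 1 = Prod.snd ∘ (fun ω => (U ω, X 1 ω)) := rfl
    rw [h1, ← Measure.map_map measurable_snd (hUmeas.prodMk hVmeas), hUV,
      Measure.map_snd_prod]
    simp
  have hindepUV : IndepFun U (X 1) μ :=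
    (indepFun_iff_map_prod_eq_prod_map_map hUmeas.aemeasurable hVmeas.aemeasurable).mpr
      (by rw [hUV, hmapU, hmapV])
  -- variance facts
  have hYint : Integrable Y μ := by
    rw [hY, hX₁]; exact (law_memLp hZ₁ hlaw₁).integrable one_le_two
  have hvarY : variance Y μ = ∫ x, x ^ 2 ∂(gaussianReal 0 1) := by
    rw [hY, hX₁]; exact law_variance hZ₁ hlaw₁
  have hvarYpos : 0 < variance Y μ := by rw [hvarY]; exact gauss_integral_sq_pos
  have hvarV : variance (X 1) μ = ∫ x, x ^ 2 ∂(gaussianReal 0 1) := law_variance hVmeas hmapV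
  -- closed Sobol values
  have hmle : ∀ A : Finset (Fin 2), sigmaGen X A ≤ mΩ := sigmaGen_le hXmeas
  have hSempty : closedSobol μ X Y ∅ = 0 := by
    rw [closedSobol, sigmaGen_empty, condExp_bot, variance_const', zero_div]
  have hSY : ∀ A : Finset (Fin 2), 0 ∈ A → closedSobol μ X Y A = 1 := by
    intro A hA
    haveI : SigmaFinite (μ.trim (hmle A)) := by infer_instance
    have hsm : StronglyMeasurable[sigmaGen X A] Y := by
      rw [hY]; exact stronglyMeasurable_sigmaGen hA
    rw [closedSobol, condExp_of_stronglyMeasurable (hmle A) hsm hYint]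
    exact div_self hvarYpos.ne'
  -- the conditional expectation given X 1
  have hintU : ∫ ω, U ω ∂μ = 0 := law_integral hUmeas hmapU
  have hUint : Integrable U μ := (law_memLp hUmeas hmapU).integrable one_le_two
  have hVint : Integrable (X 1) μ := (law_memLp hVmeas hmapV).integrable one_le_two
  have hae : (fun ω => ρ * X 1 ω) =ᵐ[μ] μ[Y|sigmaGen X ({1} : Finset (Fin 2))] := by
    rw [sigmaGen_singleton]
    haveI : SigmaFinite (μ.trim (measurable_iff_comap_le.mp hVmeas)) := by infer_instance
    refine ae_eq_condExp_of_forall_setIntegral_eq (measurable_iff_comap_le.mp hVmeas) hYint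
      ?_ ?_ ?_
    · intro t _ _
      exact (hVint.const_mul ρ).integrableOn
    · intro t ht _
      obtain ⟨B, hB, rfl⟩ := ht
      have hA : MeasurableSet (X 1 ⁻¹' B) := hVmeas hB
      set w : Ω → ℝ := fun ω => Set.indicator B (fun _ => (1 : ℝ)) (X 1 ω) with hw
      have hw_int : Integrable w μ := by
        have : w = Set.indicator (X 1 ⁻¹' B) (fun _ => (1 : ℝ)) := by
          funext ω
          by_cases hω : X 1 ω ∈ B <;> simp [hw, Set.indicator, hω]
        rw [this]
        exact (integrable_const (1 : ℝ)).indicator hA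
      have hindep_wU : IndepFun w U μ :=
        hindepUV.symm.comp (measurable_const.indicator hB) measurable_id
      have hprod : ∫ ω, w ω * U ω ∂μ = 0 := by
        have h := hindep_wU.integral_mul_eq_mul_integral hw_int.aestronglyMeasurable hUint.aestronglyMeasurable
        rw [show (w * U : Ω → ℝ) = fun ω => w ω * U ω from rfl] at h
        rw [h, hintU, mul_zero]
      have hsetU : ∫ ω in X 1 ⁻¹' B, U ω ∂μ = 0 := by
        rw [← integral_indicator hA]
        have : Set.indicator (X 1 ⁻¹' B) U = fun ω => w ω * U ω := by
          funext ω
          by_cases hω : X 1 ω ∈ B <;> simp [hw, Set.indicator, hω]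
        rw [this, hprod]
      have hdiff : (fun ω => Y ω - ρ * X 1 ω) = fun ω => c * U ω := by
        funext ω
        rw [hY, hX₁, hX₂, hU]
        simp only
        linear_combination (-(Z₁ ω)) * hs2
      have h1 : ∫ ω in X 1 ⁻¹' B, (Y ω - ρ * X 1 ω) ∂μ = 0 := by
        have h2 : ∫ ω in X 1 ⁻¹' B, (Y ω - ρ * X 1 ω) ∂μ
            = ∫ ω in X 1 ⁻¹' B, c * U ω ∂μ := by rw [hdiff]
        rw [h2, integral_const_mul, hsetU, mul_zero]
      have h3 := integral_sub hYint.integrableOn ((hVint.const_mul ρ).integrableOn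
        (s := X 1 ⁻¹' B))
      rw [h3] at h1
      linarith
    · exact StronglyMeasurable.aestronglyMeasurable
        (((measurable_iff_comap_le.mpr le_rfl).const_mul ρ).stronglyMeasurable)
  have hS1 : closedSobol μ X Y ({1} : Finset (Fin 2)) = ρ ^ 2 := by
    rw [closedSobol, ← variance_congr' hae, variance_const_mul, hvarV, hvarY, mul_div_assoc,
      div_self (by rw [← hvarY]; exact hvarYpos.ne'), mul_one]
  have hS0 : closedSobol μ X Y ({0} : Finset (Fin 2)) = 1 := hSY {0} (by decide)
  have hS01 : closedSobol μ X Y ({0, 1} : Finset (Fin 2)) = 1 := hSY {0, 1} (by decide)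
  -- assemble
  constructor
  · rw [shapleyEffect,
      show (Finset.univ.erase (0 : Fin 2)).powerset
        = ({∅, {1}} : Finset (Finset (Fin 2))) from by decide,
      Finset.sum_insert (by decide), Finset.sum_singleton]
    rw [show insert (0 : Fin 2) ∅ = ({0} : Finset (Fin 2)) from by decide,
      show insert (0 : Fin 2) ({1} : Finset (Fin 2)) = ({0, 1} : Finset (Fin 2)) from by decide,
      hS0, hS01, hS1, hSempty]
    simp [Nat.factorial]
    ring
  · rw [shapleyEffect,
      show (Finset.univ.erase (1 : Fin 2)).powerset
        = ({∅, {0}} : Finset (Finset (Fin 2))) from by decide,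
      Finset.sum_insert (by decide), Finset.sum_singleton]
    rw [show insert (1 : Fin 2) ∅ = ({1} : Finset (Fin 2)) from by decide,
      show insert (1 : Fin 2) ({0} : Finset (Fin 2)) = ({0, 1} : Finset (Fin 2)) from by decide,
      hS0, hS01, hS1, hSempty]
    simp [Nat.factorial]
    ring
end
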